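/- Fix d ≥ 1, h ∈ (1/2, 1], m > 0, set γ* = (2h−1)·d, and fix any B > γ*. Define A(γ) = Φ(√(d/(d+γ²)) · (1 + γ(2h−1)) · m). Then there exist constants C₁, C₂ > 0 such that for all γ ∈ [0, B]: C₁·(γ − γ*)² ≤ A(γ*) − A(γ) ≤ C₂·(γ − γ*)². (This is the quantitative part of Proposition 4: adapting the hop-aggregation parameter from γ_S to the optimal γ_T = d_T(2h_T−1) improves target accuracy by Θ((γ_T − γ_S)²), hence by Θ((Δh)² + (Δd)²).) -/

import Mathlib

open MeasureTheory

noncomputable def stdNormalCDF (x : ℝ) : ℝ :=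
  ∫ t in Set.Iic x, (Real.sqrt (2 * Real.pi))⁻¹ * Real.exp (-t ^ 2 / 2)

lemma gauss_integrable :
    Integrable (fun t : ℝ => (Real.sqrt (2 * Real.pi))⁻¹ * Real.exp (-t ^ 2 / 2)) := by
  have h : (fun t : ℝ => (Real.sqrt (2 * Real.pi))⁻¹ * Real.exp (-t ^ 2 / 2))
      = fun t : ℝ => (Real.sqrt (2 * Real.pi))⁻¹ * Real.exp (-(2⁻¹ : ℝ) * t ^ 2) := by
    funext t; ring_nf
  rw [h]
  exact (integrable_exp_neg_mul_sq (by norm_num)).const_mul _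

lemma cdf_sub (a b : ℝ) (hba : b ≤ a) :
    stdNormalCDF a - stdNormalCDF b
      = ∫ t in Set.Ioc b a, (Real.sqrt (2 * Real.pi))⁻¹ * Real.exp (-t ^ 2 / 2) := by
  rw [stdNormalCDF, stdNormalCDF,
    intervalIntegral.integral_Iic_sub_Iic gauss_integrable.integrableOn gauss_integrable.integrableOn,
    intervalIntegral.integral_of_le hba]

lemma cdf_diff_bounds (a b : ℝ) (hb : 0 ≤ b) (hba : b ≤ a) :
    (Real.sqrt (2 * Real.pi))⁻¹ * Real.exp (-a ^ 2 / 2) * (a - b)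
        ≤ stdNormalCDF a - stdNormalCDF b ∧
      stdNormalCDF a - stdNormalCDF b ≤ (Real.sqrt (2 * Real.pi))⁻¹ * (a - b) := by
  have hπ : 0 < (Real.sqrt (2 * Real.pi))⁻¹ := by
    positivity
  rw [cdf_sub a b hba]
  have hvol : (volume (Set.Ioc b a)).toReal = a - b := by
    rw [Real.volume_Ioc, ENNReal.toReal_ofReal (by linarith)]
  constructor
  · calc (Real.sqrt (2 * Real.pi))⁻¹ * Real.exp (-a ^ 2 / 2) * (a - b)
        = ∫ _ in Set.Ioc b a, (Real.sqrt (2 * Real.pi))⁻¹ * Real.exp (-a ^ 2 / 2) := by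
          rw [setIntegral_const, measureReal_def, hvol, smul_eq_mul, mul_comm]
      _ ≤ _ := by
          apply setIntegral_mono_on (integrableOn_const (by simp [Real.volume_Ioc]))
            gauss_integrable.integrableOn measurableSet_Ioc
          intro t ht
          have ht0 : 0 ≤ t := le_trans hb (le_of_lt ht.1)
          have : -a ^ 2 / 2 ≤ -t ^ 2 / 2 := by
            have : t ^ 2 ≤ a ^ 2 := pow_le_pow_left₀ ht0 ht.2 2
            linarith
          exact mul_le_mul_of_nonneg_left (Real.exp_le_exp.2 this) hπ.le
  · calc (∫ t in Set.Ioc b a, (Real.sqrt (2 * Real.pi))⁻¹ * Real.exp (-t ^ 2 / 2))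
        ≤ ∫ _ in Set.Ioc b a, (Real.sqrt (2 * Real.pi))⁻¹ := by
          apply setIntegral_mono_on gauss_integrable.integrableOn
            (integrableOn_const (by simp [Real.volume_Ioc])) measurableSet_Ioc
          intro t _
          calc (Real.sqrt (2 * Real.pi))⁻¹ * Real.exp (-t ^ 2 / 2)
              ≤ (Real.sqrt (2 * Real.pi))⁻¹ * 1 := by
                apply mul_le_mul_of_nonneg_left _ hπ.le
                rw [Real.exp_le_one_iff]
                nlinarith [sq_nonneg t]
            _ = _ := mul_one _
      _ = (Real.sqrt (2 * Real.pi))⁻¹ * (a - b) := by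
          rw [setIntegral_const, measureReal_def, hvol, smul_eq_mul, mul_comm]

noncomputable def gcnAccuracyGamma (d h m γ : ℝ) : ℝ :=
  stdNormalCDF (Real.sqrt (d / (d + γ ^ 2)) * (1 + γ * (2 * h - 1)) * m)

set_option maxHeartbeats 2000000 in
/-- **Proposition 4 (quantitative gain from adapting γ).**
For `d ≥ 1`, `h ∈ (1/2, 1]`, `m > 0`, `γ* = (2h-1)d`, and any `B > γ*`, there exist
`C₁, C₂ > 0` such that for all `γ ∈ [0, B]`:
`C₁·(γ - γ*)² ≤ A(γ*) - A(γ) ≤ C₂·(γ - γ*)²`. -/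
theorem adapting_gamma_accuracy_improvement (d h m B : ℝ) (hd : 1 ≤ d)
    (hh1 : 1 / 2 < h) (hh2 : h ≤ 1) (hm : 0 < m) (hB : (2 * h - 1) * d < B) :
    ∃ C₁ > (0 : ℝ), ∃ C₂ > (0 : ℝ), ∀ γ ∈ Set.Icc (0 : ℝ) B,
      C₁ * (γ - (2 * h - 1) * d) ^ 2 ≤
        gcnAccuracyGamma d h m ((2 * h - 1) * d) - gcnAccuracyGamma d h m γ ∧
      gcnAccuracyGamma d h m ((2 * h - 1) * d) - gcnAccuracyGamma d h m γ ≤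
        C₂ * (γ - (2 * h - 1) * d) ^ 2 := by
  simp only [gcnAccuracyGamma]
  have hs : (0:ℝ) < 2*h-1 := by linarith
  have hd0 : (0:ℝ) < d := by linarith
  have hB0 : (0:ℝ) < B := lt_trans (by positivity) hB
  set gs : ℝ := (2*h-1)*d with hgs
  set G : ℝ := Real.sqrt (d/(d+gs^2)) * (1+gs*(2*h-1)) * m with hG
  set L : ℝ := Real.sqrt (d/(d+B^2)) * m with hL
  clear_value gs G L
  have hgs0 : 0 < gs := by rw [hgs]; positivity
  have hdgs : (0:ℝ) < d + gs^2 := by positivity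
  have e2 : Real.sqrt (d/(d+gs^2))^2 = d/(d+gs^2) := Real.sq_sqrt (by positivity)
  have hL0 : 0 < L := by rw [hL]; positivity
  have hG0 : 0 < G := by
    rw [hG]
    have h1 : (0:ℝ) < 1 + gs*(2*h-1) := by nlinarith
    have h2 : (0:ℝ) < Real.sqrt (d/(d+gs^2)) := by positivity
    positivity
  have Gsq : G^2 = d/(d+gs^2) * (1+gs*(2*h-1))^2 * m^2 := by
    rw [hG, mul_pow, mul_pow, e2]
  refine ⟨(Real.sqrt (2*Real.pi))⁻¹ * Real.exp (-G^2/2) * (m^2/(2*G*(d+B^2))),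
    by positivity, (Real.sqrt (2*Real.pi))⁻¹ * (m^2/(2*L*d)), by positivity, ?_⟩
  intro γ hγ
  obtain ⟨hγ0, hγB⟩ := hγ
  set g : ℝ := Real.sqrt (d/(d+γ^2)) * (1+γ*(2*h-1)) * m with hg
  clear_value g
  have hdγ : (0:ℝ) < d + γ^2 := by positivity
  have e1 : Real.sqrt (d/(d+γ^2))^2 = d/(d+γ^2) := Real.sq_sqrt (by positivity)
  have hγ2 : γ^2 ≤ B^2 := by nlinarith
  have gsq : g^2 = d/(d+γ^2) * (1+γ*(2*h-1))^2 * m^2 := by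
    rw [hg, mul_pow, mul_pow, e1]
  have key : (G^2 - g^2) * (d+γ^2) = m^2*(γ-gs)^2 := by
    rw [Gsq, gsq, hgs]
    have h2 : (d + ((2*h-1)*d)^2) ≠ 0 := by positivity
    field_simp
    ring
  have hgL : L ≤ g := by
    have h1 : Real.sqrt (d/(d+B^2)) ≤ Real.sqrt (d/(d+γ^2)) := by
      apply Real.sqrt_le_sqrt
      apply div_le_div_of_nonneg_left hd0.le hdγ (by linarith)
    have h2 : (1:ℝ) ≤ 1+γ*(2*h-1) := by nlinarith
    have h3 : (0:ℝ) ≤ Real.sqrt (d/(d+γ^2)) := Real.sqrt_nonneg _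
    rw [hL, hg]
    calc Real.sqrt (d/(d+B^2)) * m ≤ Real.sqrt (d/(d+γ^2)) * m :=
          mul_le_mul_of_nonneg_right h1 hm.le
      _ = Real.sqrt (d/(d+γ^2)) * 1 * m := by ring
      _ ≤ Real.sqrt (d/(d+γ^2)) * (1+γ*(2*h-1)) * m :=
          mul_le_mul_of_nonneg_right (mul_le_mul_of_nonneg_left h2 h3) hm.le
  have hg0 : 0 ≤ g := le_trans hL0.le hgL
  have hgG : g ≤ G := by
    have hsq : g^2 ≤ G^2 := by
      have h4 : (0:ℝ) ≤ m^2*(γ-gs)^2 := by positivity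
      by_contra hc
      push_neg at hc
      have h5 : (G^2 - g^2) * (d+γ^2) < 0 := mul_neg_of_neg_of_pos (by linarith) hdγ
      linarith [key]
    calc g = Real.sqrt (g^2) := (Real.sqrt_sq hg0).symm
      _ ≤ Real.sqrt (G^2) := Real.sqrt_le_sqrt hsq
      _ = G := Real.sqrt_sq hG0.le
  have hLG : L ≤ G := le_trans hgL hgG
  have low : m^2/(2*G*(d+B^2)) * (γ-gs)^2 ≤ G - g := by
    rw [div_mul_eq_mul_div, div_le_iff₀ (by positivity)]
    have h1 : (0:ℝ) ≤ (G-g)*(G-g)*(d+B^2) := by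
      apply mul_nonneg (mul_nonneg (by linarith) (by linarith)) (by positivity)
    have h2 : (0:ℝ) ≤ (G-g)*((G+g)*(B^2-γ^2)) := by
      apply mul_nonneg (by linarith)
      apply mul_nonneg (by linarith) (by linarith)
    nlinarith [key]
  have high : G - g ≤ m^2/(2*L*d) * (γ-gs)^2 := by
    rw [div_mul_eq_mul_div, le_div_iff₀ (by positivity)]
    have h1 : (0:ℝ) ≤ (G-g)*((G+g-2*L)*d) := by
      apply mul_nonneg (by linarith)
      apply mul_nonneg (by linarith) hd0.le
    have h2 : (0:ℝ) ≤ (G-g)*((G+g)*γ^2) := by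
      apply mul_nonneg (by linarith)
      apply mul_nonneg (by linarith) (by positivity)
    nlinarith [key]
  obtain ⟨cb1, cb2⟩ := cdf_diff_bounds G g hg0 hgG
  have hπ : (0:ℝ) < (Real.sqrt (2*Real.pi))⁻¹ := by positivity
  constructor
  · calc (Real.sqrt (2*Real.pi))⁻¹ * Real.exp (-G^2/2) * (m^2/(2*G*(d+B^2))) * (γ-gs)^2
        = (Real.sqrt (2*Real.pi))⁻¹ * Real.exp (-G^2/2) * (m^2/(2*G*(d+B^2)) * (γ-gs)^2) := by
          ring
      _ ≤ (Real.sqrt (2*Real.pi))⁻¹ * Real.exp (-G^2/2) * (G - g) :=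
          mul_le_mul_of_nonneg_left low (by positivity)
      _ ≤ stdNormalCDF G - stdNormalCDF g := cb1
  · calc stdNormalCDF G - stdNormalCDF g
        ≤ (Real.sqrt (2*Real.pi))⁻¹ * (G - g) := cb2
      _ ≤ (Real.sqrt (2*Real.pi))⁻¹ * (m^2/(2*L*d) * (γ-gs)^2) :=
          mul_le_mul_of_nonneg_left high hπ.le
      _ = (Real.sqrt (2*Real.pi))⁻¹ * (m^2/(2*L*d)) * (γ-gs)^2 := by ring
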